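/- Let δ_R ∈ (0,1), P_SD, P_SR, P_RD ∈ (0,1), P = P_SD + (1−P_SD)·P_SR. The line y = δ_R·P_RD − ((1−P_SD)·P_SR/P)·x − (δ_R·P_RD/((1−δ_R)·P))·x passes through the point B = (x_B, y_B) with x_B = (1−δ_R)²·P and y_B = δ_R²·P_RD − (1−δ_R)²·(1−P_SD)·P_SR, and at x_B it is tangent (has matching value and slope) to the curve y = P_RD − 2·P_RD·√(x/P) + (x/P)·(P_RD − (1−P_SD)·P_SR). -/

import Mathlib

/-- The linear segment AB of the closure boundary passes through point B and
is tangent there (matching value and slope) to the nonlinear boundary curve. -/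
theorem tangency_at_B (δ_R P_SD P_SR P_RD : ℝ)
    (hδR : δ_R ∈ Set.Ioo (0:ℝ) 1)
    (hSD : P_SD ∈ Set.Ioo (0:ℝ) 1) (hSR : P_SR ∈ Set.Ioo (0:ℝ) 1)
    (hRD : P_RD ∈ Set.Ioo (0:ℝ) 1)
    (P : ℝ) (hP : P = P_SD + (1 - P_SD) * P_SR)
    (L g : ℝ → ℝ)
    (hL : ∀ x, L x = δ_R * P_RD - ((1 - P_SD) * P_SR / P) * x
      - (δ_R * P_RD / ((1 - δ_R) * P)) * x)
    (hg : ∀ x, g x = P_RD - 2 * P_RD * Real.sqrt (x / P)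
      + (x / P) * (P_RD - (1 - P_SD) * P_SR))
    (xB yB : ℝ) (hxB : xB = (1 - δ_R) ^ 2 * P)
    (hyB : yB = δ_R ^ 2 * P_RD - (1 - δ_R) ^ 2 * ((1 - P_SD) * P_SR)) :
    L xB = yB ∧ g xB = yB ∧
    HasDerivAt L (-((1 - P_SD) * P_SR / P) - δ_R * P_RD / ((1 - δ_R) * P)) xB ∧
    HasDerivAt g (-((1 - P_SD) * P_SR / P) - δ_R * P_RD / ((1 - δ_R) * P)) xB := by
  obtain ⟨hδ0, hδ1⟩ := hδR
  have hP0 : 0 < P := by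
    rw [hP]; nlinarith [hSD.1, hSD.2, hSR.1, hSR.2]
  have h1δ : 0 < 1 - δ_R := by linarith
  have hxP : xB / P = (1 - δ_R) ^ 2 := by
    field_simp [hxB]; rw [hxB]; ring
  have hsq : Real.sqrt (xB / P) = 1 - δ_R := by
    rw [hxP, Real.sqrt_sq h1δ.le]
  have hgxB : g xB = yB := by
    rw [hg, hsq, hxP, hyB]; ring
  have hLxB : L xB = yB := by
    rw [hL, hxB, hyB]
    have e1 : (1 - P_SD) * P_SR / P * ((1 - δ_R) ^ 2 * P)
        = (1 - P_SD) * P_SR * (1 - δ_R) ^ 2 := by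
      field_simp; try ring
    have e2 : δ_R * P_RD / ((1 - δ_R) * P) * ((1 - δ_R) ^ 2 * P)
        = δ_R * P_RD * (1 - δ_R) := by
      field_simp
    rw [e1, e2]; ring
  refine ⟨hLxB, hgxB, ?_, ?_⟩
  · have hfun : L = fun x => δ_R * P_RD - ((1 - P_SD) * P_SR / P) * x
        - (δ_R * P_RD / ((1 - δ_R) * P)) * x := funext hL
    rw [hfun]
    have h := (((hasDerivAt_id xB).const_mul ((1 - P_SD) * P_SR / P)).const_sub
      (δ_R * P_RD)).sub ((hasDerivAt_id xB).const_mul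
      (δ_R * P_RD / ((1 - δ_R) * P)))
    simp only [mul_one] at h; exact h
  · have hxdiv : HasDerivAt (fun x : ℝ => x / P) (1 / P) xB := by
      simpa using (hasDerivAt_id xB).div_const P
    have hne : xB / P ≠ 0 := by
      rw [hxP]; positivity
    have hsqrt : HasDerivAt (fun x => Real.sqrt (x / P))
        (1 / (2 * Real.sqrt (xB / P)) * (1 / P)) xB :=
      (Real.hasDerivAt_sqrt hne).comp xB hxdiv
    have hD : HasDerivAt g
        (-(2 * P_RD * (1 / (2 * Real.sqrt (xB / P)) * (1 / P)))
          + 1 / P * (P_RD - (1 - P_SD) * P_SR)) xB := by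
      have hfun : g = fun x => P_RD - 2 * P_RD * Real.sqrt (x / P)
          + (x / P) * (P_RD - (1 - P_SD) * P_SR) := funext hg
      rw [hfun]
      have h := ((hsqrt.const_mul (2 * P_RD)).const_sub P_RD).add
        (hxdiv.mul_const (P_RD - (1 - P_SD) * P_SR))
      exact h
    convert hD using 1
    rw [hsq]
    field_simp
    ring
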